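/- arXiv:1611.07247 — 7 statements merged into one kernel-verified Lean document; each statement's English description precedes it below -/
import Mathlib

section
/- Let φ : ℝ → [0,∞] be a proper convex function with φ(1) = 0, strictly convex in a neighborhood of 1. Let P and Q be probability measures on ℝ with Q absolutely continuous with respect to P, and define D_φ(Q,P) = ∫ φ(dQ/dP) dP. Then D_φ(Q,P) = 0 if and only if P = Q. -/
open MeasureTheory Set

lemma aux_phi_eq_zero (φ : ℝ → ℝ)
    (hpos : ∀ x, 0 ≤ φ x) (hconv : ConvexOn ℝ (Ici 0) φ) (hone : φ 1 = 0)
    (hstrict : ∃ ε > 0, StrictConvexOn ℝ (Ioo (1 - ε) (1 + ε)) φ)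
    {t : ℝ} (ht : 0 ≤ t) (h0 : φ t = 0) : t = 1 := by
  obtain ⟨ε, hε, hsc⟩ := hstrict
  by_contra hne
  have hne' : (1 : ℝ) - t ≠ 0 := fun h => hne (by linarith)
  have hz : ∀ θ : ℝ, 0 ≤ θ → θ ≤ 1 → φ (θ * 1 + (1 - θ) * t) = 0 := by
    intro θ hθ0 hθ1
    have h := hconv.2 (mem_Ici.mpr zero_le_one) (mem_Ici.mpr ht) hθ0
      (show (0:ℝ) ≤ 1 - θ by linarith) (show θ + (1 - θ) = 1 by ring)
    simp only [smul_eq_mul] at h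
    have h2 := hpos (θ * 1 + (1 - θ) * t)
    nlinarith [h, h2]
  have hz' : ∀ s : ℝ, min t 1 ≤ s → s ≤ max t 1 → φ s = 0 := by
    intro s hs1 hs2
    have hb : 0 ≤ (s - t) / (1 - t) ∧ (s - t) / (1 - t) ≤ 1 := by
      rcases lt_or_gt_of_ne hne with h | h
      · rw [min_eq_left h.le] at hs1
        rw [max_eq_right h.le] at hs2
        refine ⟨div_nonneg (by linarith) (by linarith), ?_⟩
        rw [div_le_one (by linarith)]; linarith
      · rw [min_eq_right h.le] at hs1
        rw [max_eq_left h.le] at hs2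
        refine ⟨by rw [div_nonneg_iff]; right; exact ⟨by linarith, by linarith⟩, ?_⟩
        rw [div_le_one_iff]
        right; right; exact ⟨by linarith, by linarith⟩
    obtain ⟨hθ0, hθ1⟩ := hb
    have h := hz _ hθ0 hθ1
    have heq : (s - t) / (1 - t) * 1 + (1 - (s - t) / (1 - t)) * t = s := by
      field_simp
      ring
    rwa [heq] at h
  have hmem1 : (1 : ℝ) ∈ Ioo (1 - ε) (1 + ε) := ⟨by linarith, by linarith⟩
  rcases lt_or_gt_of_ne hne with h | h
  · -- t < 1
    set δ : ℝ := min (ε / 2) (1 - t) with hδdef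
    have hδ0 : 0 < δ := lt_min (by linarith) (by linarith)
    have hδε : δ ≤ ε / 2 := min_le_left _ _
    have hδt : δ ≤ 1 - t := min_le_right _ _
    have hφb : φ (1 - δ) = 0 :=
      hz' _ (le_trans (min_le_left t 1) (by linarith)) (le_trans (by linarith) (le_max_right t 1))
    have hφm : φ ((1 + (1 - δ)) / 2) = 0 :=
      hz' _ (le_trans (min_le_left t 1) (by linarith)) (le_trans (by linarith) (le_max_right t 1))
    have hmemb : (1 - δ) ∈ Ioo (1 - ε) (1 + ε) := ⟨by linarith, by linarith⟩
    have hs := hsc.2 hmem1 hmemb (by intro hh; linarith : (1 : ℝ) ≠ 1 - δ)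
      (by norm_num : (0:ℝ) < 1/2) (by norm_num : (0:ℝ) < 1/2) (by norm_num)
    simp only [smul_eq_mul] at hs
    have heq : 1/2 * 1 + 1/2 * (1 - δ) = (1 + (1 - δ)) / 2 := by ring
    rw [heq, hone, hφb, hφm] at hs
    linarith
  · -- t > 1
    set δ : ℝ := min (ε / 2) (t - 1) with hδdef
    have hδ0 : 0 < δ := lt_min (by linarith) (by linarith)
    have hδε : δ ≤ ε / 2 := min_le_left _ _
    have hδt : δ ≤ t - 1 := min_le_right _ _
    have hφb : φ (1 + δ) = 0 :=
      hz' _ (le_trans (min_le_right t 1) (by linarith)) (le_trans (by linarith) (le_max_left t 1))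
    have hφm : φ ((1 + (1 + δ)) / 2) = 0 :=
      hz' _ (le_trans (min_le_right t 1) (by linarith)) (le_trans (by linarith) (le_max_left t 1))
    have hmemb : (1 + δ) ∈ Ioo (1 - ε) (1 + ε) := ⟨by linarith, by linarith⟩
    have hs := hsc.2 hmem1 hmemb (by intro hh; linarith : (1 : ℝ) ≠ 1 + δ)
      (by norm_num : (0:ℝ) < 1/2) (by norm_num : (0:ℝ) < 1/2) (by norm_num)
    simp only [smul_eq_mul] at hs
    have heq : 1/2 * 1 + 1/2 * (1 + δ) = (1 + (1 + δ)) / 2 := by ring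
    rw [heq, hone, hφb, hφm] at hs
    linarith

lemma aux_meas (φ : ℝ → ℝ) (hconv : ConvexOn ℝ (Ici 0) φ) :
    Measurable (fun x : ℝ => φ (max x 0)) := by
  apply measurable_of_continuousOn_compl_singleton (0 : ℝ)
  intro x hx
  have hx' : x ≠ 0 := hx
  rcases lt_or_gt_of_ne hx' with h | h
  · -- x < 0 : locally constant φ 0
    have hev : (fun y : ℝ => φ (max y 0)) =ᶠ[nhds x] fun _ => φ 0 := by
      filter_upwards [Iio_mem_nhds h] with y hy
      simp [max_eq_right (le_of_lt (mem_Iio.mp hy))]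
    exact hev.continuousAt.continuousWithinAt
  · -- x > 0 : agrees with φ near x, φ continuous on Ioi 0
    have hcont : ContinuousOn φ (Ioi 0) :=
      ((hconv.subset (Ioi_subset_Ici le_rfl) (convex_Ioi 0)).continuousOn isOpen_Ioi)
    have hca : ContinuousAt φ x := hcont.continuousAt (Ioi_mem_nhds h)
    have hev : ∀ᶠ y in nhds x, φ (max y 0) = φ y := by
      filter_upwards [Ioi_mem_nhds h] with y hy
      simp [max_eq_left (le_of_lt (mem_Ioi.mp hy))]
    exact (hca.congr_of_eventuallyEq hev).continuousWithinAt

/-- For a nonnegative convex `φ` with `φ 1 = 0` that is strictly convex in a neighborhood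
of `1`, the φ-divergence `D_φ(Q,P) = ∫ φ(dQ/dP) dP` between probability measures `Q ≪ P`
vanishes iff `P = Q`. -/
theorem stmt_0 (φ : ℝ → ℝ) (P Q : Measure ℝ)
    [IsProbabilityMeasure P] [IsProbabilityMeasure Q]
    (hpos : ∀ x, 0 ≤ φ x) (hconv : ConvexOn ℝ (Ici 0) φ) (hone : φ 1 = 0)
    (hstrict : ∃ ε > 0, StrictConvexOn ℝ (Ioo (1 - ε) (1 + ε)) φ)
    (hac : Q ≪ P) :
    (∫⁻ x, ENNReal.ofReal (φ ((Q.rnDeriv P x).toReal)) ∂P) = 0 ↔ P = Q := by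
  constructor
  · intro h
    have hmeas : Measurable fun x => ENNReal.ofReal (φ ((Q.rnDeriv P x).toReal)) := by
      have : (fun x => ENNReal.ofReal (φ ((Q.rnDeriv P x).toReal)))
          = fun x => ENNReal.ofReal ((fun y : ℝ => φ (max y 0)) ((Q.rnDeriv P x).toReal)) := by
        funext x
        simp [max_eq_left ENNReal.toReal_nonneg]
      rw [this]
      exact ENNReal.measurable_ofReal.comp
        ((aux_meas φ hconv).comp ((Q.measurable_rnDeriv P).ennreal_toReal))
    have hae := (lintegral_eq_zero_iff hmeas).mp h
    have hae1 : (fun x => (Q.rnDeriv P x).toReal) =ᵐ[P] fun _ => 1 := by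
      filter_upwards [hae] with x hx
      have hx' : φ ((Q.rnDeriv P x).toReal) = 0 := by
        have := hpos ((Q.rnDeriv P x).toReal)
        simpa [ENNReal.ofReal_eq_zero] using le_antisymm (by simpa using hx) this
      exact aux_phi_eq_zero φ hpos hconv hone hstrict ENNReal.toReal_nonneg hx'
    have hae2 : Q.rnDeriv P =ᵐ[P] fun _ => (1 : ENNReal) := by
      filter_upwards [hae1, Q.rnDeriv_lt_top P] with x hx hlt
      have := ENNReal.ofReal_toReal hlt.ne
      rw [← this, hx]
      simp
    have : P.withDensity (Q.rnDeriv P) = Q := Measure.withDensity_rnDeriv_eq Q P hac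
    rw [← this, withDensity_congr_ae hae2,
      show (fun _ : ℝ => (1 : ENNReal)) = 1 from rfl, withDensity_one]
  · intro h
    subst h
    have hae : (fun x => ENNReal.ofReal (φ ((P.rnDeriv P x).toReal))) =ᵐ[P] fun _ => 0 := by
      filter_upwards [Measure.rnDeriv_self P] with x hx
      rw [hx]
      simp [hone]
    rw [lintegral_congr_ae hae, lintegral_zero]
end

section
/- Let φ be a differentiable strictly convex function with φ(1)=0 and let φ^#(t) = t·φ'(t) − φ(t). For probability density functions p, q, r on ℝ (all mutually absolutely continuous and with the relevant integrals finite), it holds that ∫ φ'(p/r)(x) p(x) dx − ∫ φ^#(p/r)(y) q(y) dy ≤ D_φ(p,q) = ∫ φ(p(x)/q(x)) q(x) dx, with equality when r = q. -/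
open MeasureTheory

/-- `φ^#(t) = t φ'(t) − φ(t)`. -/
noncomputable def phiSharp (φ : ℝ → ℝ) (t : ℝ) : ℝ := t * deriv φ t - φ t

/-- Tangent line inequality for a convex differentiable function on `Ioi 0`. -/
lemma tangent_le (φ : ℝ → ℝ)
    (hφd : ∀ t ∈ Set.Ioi (0:ℝ), DifferentiableAt ℝ φ t)
    (hφs : StrictConvexOn ℝ (Set.Ioi 0) φ) {u v : ℝ} (hu : 0 < u) (hv : 0 < v) :
    φ u + deriv φ u * (v - u) ≤ φ v := by
  have hc := hφs.convexOn
  rcases lt_trichotomy u v with h | h | h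
  · have := hc.deriv_le_slope (Set.mem_Ioi.2 hu) (Set.mem_Ioi.2 hv) h (hφd u hu)
    rw [slope_def_field] at this
    have hvu : 0 < v - u := by linarith
    have h5 := (le_div_iff₀ hvu).1 this
    linarith
  · simp [h]
  · have := hc.slope_le_deriv (Set.mem_Ioi.2 hv) (Set.mem_Ioi.2 hu) h (hφd u hu)
    rw [slope_def_field] at this
    have hvu : 0 < u - v := by linarith
    have h5 := (div_le_iff₀ hvu).1 this
    nlinarith

/-- Dual lower bound for the φ-divergence between densities:
`∫ φ'(p/r) p − ∫ φ^#(p/r) q ≤ D_φ(p,q)`, with equality when `r = q`. -/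
theorem stmt_2 (φ : ℝ → ℝ) (p q r : ℝ → ℝ)
    (hφd : ∀ t ∈ Set.Ioi (0:ℝ), DifferentiableAt ℝ φ t)
    (hφs : StrictConvexOn ℝ (Set.Ioi 0) φ) (hφ1 : φ 1 = 0)
    (hp : ∀ x, 0 < p x) (hq : ∀ x, 0 < q x) (hr : ∀ x, 0 < r x)
    (hpi : ∫ x, p x = 1) (hqi : ∫ x, q x = 1) (hri : ∫ x, r x = 1)
    (h1 : Integrable fun x => deriv φ (p x / r x) * p x)
    (h2 : Integrable fun x => phiSharp φ (p x / r x) * q x)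
    (h3 : Integrable fun x => φ (p x / q x) * q x) :
    (∫ x, deriv φ (p x / r x) * p x) - (∫ x, phiSharp φ (p x / r x) * q x)
      ≤ ∫ x, φ (p x / q x) * q x ∧
    (r = q → (∫ x, deriv φ (p x / r x) * p x) - (∫ x, phiSharp φ (p x / r x) * q x)
      = ∫ x, φ (p x / q x) * q x) := by
  have key : ∀ x, deriv φ (p x / r x) * p x - phiSharp φ (p x / r x) * q x
      ≤ φ (p x / q x) * q x := by
    intro x
    have hu : 0 < p x / r x := div_pos (hp x) (hr x)
    have hv : 0 < p x / q x := div_pos (hp x) (hq x)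
    have := tangent_le φ hφd hφs hu hv
    have hqx := hq x
    unfold phiSharp
    have h4 : (p x / q x) * q x = p x := div_mul_cancel₀ _ (ne_of_gt hqx)
    have h5 : (φ (p x / r x) + deriv φ (p x / r x) * (p x / q x - p x / r x)) * q x
        = φ (p x / r x) * q x + deriv φ (p x / r x) * p x
          - p x / r x * deriv φ (p x / r x) * q x := by
        linear_combination deriv φ (p x / r x) * h4
    linarith [mul_le_mul_of_nonneg_right this hqx.le, h5]
  constructor
  · rw [← integral_sub h1 h2]
    exact integral_mono (h1.sub h2) h3 key
  · intro hrq
    subst hrq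
    rw [← integral_sub h1 h2]
    congr 1
    funext x
    have hqx := hq x
    unfold phiSharp
    have h4 : (p x / r x) * r x = p x := div_mul_cancel₀ _ (ne_of_gt hqx)
    linear_combination (-(deriv φ (p x / r x))) * h4
end

section
/- In the EM setting, the conditional-expectation maximization step can be rewritten as a proximal step: argmax_φ Σᵢ ∫ log f(x,yᵢ|φ) hᵢ(x|φ^k) dx = argmax_φ [ Σᵢ log p_φ(yᵢ) + Σᵢ ∫ log( hᵢ(x|φ)/hᵢ(x|φ^k) ) hᵢ(x|φ^k) dx ], where hᵢ(x|φ) = f(x,yᵢ|φ)/p_φ(yᵢ) and p_φ(y) = ∫ f(x,y|φ) dx. -/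
open MeasureTheory

/-- EM as a proximal step: the argmax set of
`φ ↦ Σᵢ ∫ log f(x,yᵢ|φ) hᵢ(x|φ^k) dx` coincides with the argmax set of
`φ ↦ Σᵢ log p_φ(yᵢ) + Σᵢ ∫ log(hᵢ(x|φ)/hᵢ(x|φ^k)) hᵢ(x|φ^k) dx`, where
`hᵢ(x|φ) = f(x,yᵢ|φ)/p_φ(yᵢ)` and `p_φ(yᵢ) = ∫ f(x,yᵢ|φ) dx`. -/
theorem stmt_8 {X Φ : Type*} [MeasurableSpace X] (μ : Measure X) (n : ℕ)
    (f : Φ → Fin n → X → ℝ)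
    (hfpos : ∀ φ i x, 0 < f φ i x)
    (hfint : ∀ φ i, Integrable (f φ i) μ)
    (p : Φ → Fin n → ℝ)
    (hp : ∀ φ i, p φ i = ∫ x, f φ i x ∂μ)
    (hppos : ∀ φ i, 0 < p φ i)
    (h : Φ → Fin n → X → ℝ)
    (hh : ∀ φ i x, h φ i x = f φ i x / p φ i)
    (φk : Φ)
    (hint1 : ∀ φ i, Integrable (fun x => Real.log (f φ i x) * h φk i x) μ)
    (hint2 : ∀ φ i, Integrable (fun x => Real.log (h φ i x) * h φk i x) μ) :
    {φ0 | ∀ φ, (∑ i, ∫ x, Real.log (f φ i x) * h φk i x ∂μ)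
        ≤ ∑ i, ∫ x, Real.log (f φ0 i x) * h φk i x ∂μ}
    = {φ0 | ∀ φ,
        ((∑ i, Real.log (p φ i)) +
          ∑ i, ∫ x, Real.log (h φ i x / h φk i x) * h φk i x ∂μ)
        ≤ (∑ i, Real.log (p φ0 i)) +
          ∑ i, ∫ x, Real.log (h φ0 i x / h φk i x) * h φk i x ∂μ} := by
  have hhpos : ∀ φ i x, 0 < h φ i x := fun φ i x => by
    rw [hh]; exact div_pos (hfpos φ i x) (hppos φ i)
  -- h φk i is integrable
  have hhint : ∀ i, Integrable (h φk i) μ := fun i => by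
    have : h φk i = fun x => (p φk i)⁻¹ * f φk i x := by
      funext x; rw [hh]; ring
    rw [this]; exact (hfint φk i).const_mul _
  -- ∫ h φk i = 1
  have hone : ∀ i, (∫ x, h φk i x ∂μ) = 1 := fun i => by
    have : (∫ x, h φk i x ∂μ) = (p φk i)⁻¹ * ∫ x, f φk i x ∂μ := by
      rw [← integral_const_mul]
      congr 1; funext x; rw [hh]; ring
    rw [this, ← hp, inv_mul_cancel₀ (hppos φk i).ne']
  -- the key identity per i and φ:
  have key : ∀ φ i,
      (∫ x, Real.log (h φ i x / h φk i x) * h φk i x ∂μ)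
        = (∫ x, Real.log (f φ i x) * h φk i x ∂μ) - Real.log (p φ i)
          - (∫ x, Real.log (h φk i x) * h φk i x ∂μ) := by
    intro φ i
    have e1 : (fun x => Real.log (h φ i x / h φk i x) * h φk i x)
        = fun x => Real.log (h φ i x) * h φk i x - Real.log (h φk i x) * h φk i x := by
      funext x
      rw [Real.log_div (hhpos φ i x).ne' (hhpos φk i x).ne']
      ring
    have e2 : (fun x => Real.log (h φ i x) * h φk i x)
        = fun x => Real.log (f φ i x) * h φk i x - Real.log (p φ i) * h φk i x := by
      funext x
      rw [hh, Real.log_div (hfpos φ i x).ne' (hppos φ i).ne']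
      ring
    have ic : Integrable (fun x => Real.log (p φ i) * h φk i x) μ :=
      (hhint i).const_mul _
    have i2 : (∫ x, Real.log (h φ i x) * h φk i x ∂μ)
        = (∫ x, Real.log (f φ i x) * h φk i x ∂μ) - Real.log (p φ i) := by
      rw [e2, integral_sub (hint1 φ i) ic, integral_const_mul, hone i, mul_one]
    rw [e1, integral_sub (hint2 φ i) (hint2 φk i), i2]
  -- total objectives differ by a constant
  have keytot : ∀ φ,
      ((∑ i, Real.log (p φ i)) +
          ∑ i, ∫ x, Real.log (h φ i x / h φk i x) * h φk i x ∂μ)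
        = (∑ i, ∫ x, Real.log (f φ i x) * h φk i x ∂μ)
          - ∑ i, ∫ x, Real.log (h φk i x) * h φk i x ∂μ := by
    intro φ
    have : (∑ i, ∫ x, Real.log (h φ i x / h φk i x) * h φk i x ∂μ)
        = ∑ i, ((∫ x, Real.log (f φ i x) * h φk i x ∂μ) - Real.log (p φ i)
          - (∫ x, Real.log (h φk i x) * h φk i x ∂μ)) :=
      Finset.sum_congr rfl fun i _ => key φ i
    rw [this, Finset.sum_sub_distrib, Finset.sum_sub_distrib]
    ring
  ext φ0
  simp only [Set.mem_setOf_eq]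
  constructor
  · intro hmax φ
    rw [keytot φ, keytot φ0]
    linarith [hmax φ]
  · intro hmax φ
    have := hmax φ
    rw [keytot φ, keytot φ0] at this
    linarith
end

section
/- For a two-component Gaussian mixture p_{λ,μ₁,μ₂}(x) = λ·N(x;μ₁,1) + (1−λ)·N(x;μ₂,1) with λ ∈ (0,1), the posterior label probabilities h(x|λ,μ₁,μ₂) = λN(x;μ₁,1)/p_{λ,μ₁,μ₂}(x) satisfy: h(·|λ,μ₁,μ₂) = h(·|λ',μ₁',μ₂') pointwise on ℝ if and only if μ₁−μ₂ = μ₁'−μ₂' and log((1−λ)/λ) + μ₁²/2 − μ₂²/2 = log((1−λ')/λ') + (μ₁')²/2 − (μ₂')²/2. In particular there exist distinct parameter triplets with equal posterior probability functions. -/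
/-- Standard Gaussian density with mean `m`. -/
noncomputable def gaussPdf (x m : ℝ) : ℝ :=
  (1 / Real.sqrt (2 * Real.pi)) * Real.exp (-(x - m) ^ 2 / 2)

/-- Two-component Gaussian mixture density. -/
noncomputable def mixPdf (l m1 m2 x : ℝ) : ℝ :=
  l * gaussPdf x m1 + (1 - l) * gaussPdf x m2

/-- Posterior probability that `x` comes from the first component. -/
noncomputable def post (l m1 m2 x : ℝ) : ℝ :=
  l * gaussPdf x m1 / mixPdf l m1 m2 x

lemma post_closed (l m1 m2 x : ℝ) (hl : 0 < l) (hl1 : l < 1) :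
    post l m1 m2 x =
      1 / (1 + Real.exp (Real.log ((1 - l) / l) + (m1 ^ 2 - m2 ^ 2) / 2 + x * (m2 - m1))) := by
  have hc : (0:ℝ) < Real.sqrt (2 * Real.pi) :=
    Real.sqrt_pos.mpr (by positivity)
  have hl' : (0:ℝ) < 1 - l := by linarith
  have hlog : Real.exp (Real.log ((1 - l) / l)) = (1 - l) / l :=
    Real.exp_log (by positivity)
  have hsplit : Real.exp (Real.log ((1 - l) / l) + (m1 ^ 2 - m2 ^ 2) / 2 + x * (m2 - m1))
      = (1 - l) / l * Real.exp ((m1 ^ 2 - m2 ^ 2) / 2 + x * (m2 - m1)) := by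
    rw [add_assoc, Real.exp_add, hlog]
  have hE : Real.exp ((m1 ^ 2 - m2 ^ 2) / 2 + x * (m2 - m1))
      = Real.exp (-(x - m2) ^ 2 / 2) / Real.exp (-(x - m1) ^ 2 / 2) := by
    rw [← Real.exp_sub]; ring_nf
  have h1 : (0:ℝ) < Real.exp (-(x - m1) ^ 2 / 2) := Real.exp_pos _
  have h2 : (0:ℝ) < Real.exp (-(x - m2) ^ 2 / 2) := Real.exp_pos _
  unfold post mixPdf gaussPdf
  rw [hsplit, hE]
  field_simp

lemma one_div_one_add_exp_inj {a b : ℝ} (h : 1 / (1 + Real.exp a) = 1 / (1 + Real.exp b)) :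
    a = b := by
  have ha : (0:ℝ) < 1 + Real.exp a := by positivity
  have hb : (0:ℝ) < 1 + Real.exp b := by positivity
  rw [div_eq_div_iff ha.ne' hb.ne'] at h
  have : Real.exp a = Real.exp b := by linarith
  exact Real.exp_injective this

/-- The posterior label probabilities of two two-component Gaussian mixtures coincide
pointwise iff the mean differences and the log-odds-plus-squared-means quantities agree;
in particular distinct parameter triplets can give equal posterior functions. -/
theorem stmt_9 :
    (∀ l m1 m2 l' m1' m2' : ℝ, l ∈ Set.Ioo (0:ℝ) 1 → l' ∈ Set.Ioo (0:ℝ) 1 →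
      ((∀ x, post l m1 m2 x = post l' m1' m2' x) ↔
        (m1 - m2 = m1' - m2' ∧
          Real.log ((1 - l) / l) + m1 ^ 2 / 2 - m2 ^ 2 / 2
            = Real.log ((1 - l') / l') + m1' ^ 2 / 2 - m2' ^ 2 / 2))) ∧
    ∃ l m1 m2 l' m1' m2' : ℝ, l ∈ Set.Ioo (0:ℝ) 1 ∧ l' ∈ Set.Ioo (0:ℝ) 1 ∧
      (l, m1, m2) ≠ (l', m1', m2') ∧ ∀ x, post l m1 m2 x = post l' m1' m2' x := by
  have key : ∀ l m1 m2 l' m1' m2' : ℝ, l ∈ Set.Ioo (0:ℝ) 1 → l' ∈ Set.Ioo (0:ℝ) 1 →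
      ((∀ x, post l m1 m2 x = post l' m1' m2' x) ↔
        (m1 - m2 = m1' - m2' ∧
          Real.log ((1 - l) / l) + m1 ^ 2 / 2 - m2 ^ 2 / 2
            = Real.log ((1 - l') / l') + m1' ^ 2 / 2 - m2' ^ 2 / 2)) := by
    intro l m1 m2 l' m1' m2' hl hl'
    obtain ⟨hl0, hl1⟩ := hl
    obtain ⟨hl0', hl1'⟩ := hl'
    constructor
    · intro h
      have lin : ∀ x : ℝ,
          Real.log ((1 - l) / l) + (m1 ^ 2 - m2 ^ 2) / 2 + x * (m2 - m1)
            = Real.log ((1 - l') / l') + (m1' ^ 2 - m2' ^ 2) / 2 + x * (m2' - m1') := by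
        intro x
        have := h x
        rw [post_closed l m1 m2 x hl0 hl1, post_closed l' m1' m2' x hl0' hl1'] at this
        exact one_div_one_add_exp_inj this
      have h0 := lin 0
      have h1 := lin 1
      simp at h0
      constructor <;> linarith
    · intro ⟨h1, h2⟩
      intro x
      rw [post_closed l m1 m2 x hl0 hl1, post_closed l' m1' m2' x hl0' hl1']
      have : Real.log ((1 - l) / l) + (m1 ^ 2 - m2 ^ 2) / 2 + x * (m2 - m1)
          = Real.log ((1 - l') / l') + (m1' ^ 2 - m2' ^ 2) / 2 + x * (m2' - m1') := by
        have hb : m2 - m1 = m2' - m1' := by linarith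
        rw [hb]; linarith
      rw [this]
  refine ⟨key, ?_⟩
  refine ⟨1/2, 1, 0, 1 / (1 + Real.exp 1), 0, -1,
    ⟨by norm_num, by norm_num⟩, ⟨by positivity, ?_⟩, ?_, ?_⟩
  · rw [div_lt_one (by positivity)]
    have := Real.exp_pos 1
    linarith
  · intro hne
    have := congrArg (fun p => p.2.1) hne
    norm_num at this
  · have he : (0:ℝ) < Real.exp 1 := Real.exp_pos 1
    rw [key]
    · refine ⟨by norm_num, ?_⟩
      have h1 : ((1:ℝ) - 1/2) / (1/2) = 1 := by norm_num
      have h2 : (1 - 1 / (1 + Real.exp 1)) / (1 / (1 + Real.exp 1)) = Real.exp 1 := by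
        field_simp
        ring
      rw [h1, h2, Real.log_one, Real.log_exp]
      norm_num
    · exact ⟨by norm_num, by norm_num⟩
    · constructor
      · positivity
      · rw [div_lt_one (by positivity)]; linarith
end

section
/- Let P_T be a two-component mixture P_T = λ*P₁(·|θ*) + (1−λ*)P₀* with P₀* satisfying the linear constraints ∫g dP₀* = m(α*). If the system of equations (1/(1−λ))m* − (λ/(1−λ))m₁(θ) = m(α), where m* = ∫g dP_T and m₁(θ) = ∫g dP₁(·|θ), has the unique solution (λ*,θ*,α*), then the mixture representation is identifiable: whenever λP₁(·|θ) + (1−λ)P₀ = λ̃P₁(·|θ̃) + (1−λ̃)P̃₀ with P₀ ∈ M_α and P̃₀ ∈ M_{α̃}, one has λ=λ̃, θ=θ̃ and P₀=P̃₀. -/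
open MeasureTheory Set

lemma aux_moment {X : Type*} [MeasurableSpace X] {L : ℕ}
    (g : X → Fin L → ℝ) (PT Q P0 : Measure X)
    [IsProbabilityMeasure Q] [IsProbabilityMeasure P0]
    (hgQ : Integrable g Q) (hgP0 : Integrable g P0)
    {l : ℝ} (hl : l ∈ Ioo (0:ℝ) 1)
    (hmix : ENNReal.ofReal l • Q + ENNReal.ofReal (1 - l) • P0 = PT) :
    (1 / (1 - l)) • (∫ x, g x ∂PT) - (l / (1 - l)) • (∫ x, g x ∂Q)
      = ∫ x, g x ∂P0 := by
  have h1l : (0:ℝ) < 1 - l := by linarith [hl.2]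
  have hPT : ∫ x, g x ∂PT = l • (∫ x, g x ∂Q) + (1 - l) • (∫ x, g x ∂P0) := by
    rw [← hmix, integral_add_measure (hgQ.smul_measure (by simp))
      (hgP0.smul_measure (by simp)), integral_smul_measure, integral_smul_measure,
      ENNReal.toReal_ofReal hl.1.le, ENNReal.toReal_ofReal h1l.le]
  rw [hPT]
  funext i
  simp only [Pi.smul_apply, Pi.add_apply, Pi.sub_apply, smul_eq_mul]
  field_simp
  ring

/-- Identifiability of the semiparametric two-component mixture with moment-type linear
constraints on the unknown component: if the associated system of moment equations has the
unique solution `(λ*,θ*,α*)`, then two representations of the mixture `P_T` with constrained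
unknown components must coincide. -/
theorem stmt_10 {X Θ A : Type*} [MeasurableSpace X] {L : ℕ}
    (g : X → Fin L → ℝ) (m : A → Fin L → ℝ)
    (P1 : Θ → Measure X) [∀ θ, IsProbabilityMeasure (P1 θ)]
    (PT : Measure X) [IsProbabilityMeasure PT]
    (hgθ : ∀ θ, Integrable g (P1 θ)) (hgT : Integrable g PT)
    (lstar : ℝ) (θstar : Θ) (αstar : A) (P0star : Measure X)
    [IsProbabilityMeasure P0star]
    (hlstar : lstar ∈ Ioo (0:ℝ) 1)
    (hmixstar :
      PT = ENNReal.ofReal lstar • P1 θstar + ENNReal.ofReal (1 - lstar) • P0star)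
    (hconstar : (∫ x, g x ∂P0star) = m αstar)
    (huniq : ∀ (l : ℝ) (θ : Θ) (α : A), l ∈ Ioo (0:ℝ) 1 →
      (1 / (1 - l)) • (∫ x, g x ∂PT) - (l / (1 - l)) • (∫ x, g x ∂(P1 θ)) = m α →
      l = lstar ∧ θ = θstar ∧ α = αstar) :
    ∀ (l l' : ℝ) (θ θ' : Θ) (α α' : A) (P0 P0' : Measure X),
      IsProbabilityMeasure P0 → IsProbabilityMeasure P0' →
      Integrable g P0 → Integrable g P0' →
      l ∈ Ioo (0:ℝ) 1 → l' ∈ Ioo (0:ℝ) 1 →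
      (∫ x, g x ∂P0) = m α → (∫ x, g x ∂P0') = m α' →
      ENNReal.ofReal l • P1 θ + ENNReal.ofReal (1 - l) • P0 = PT →
      ENNReal.ofReal l' • P1 θ' + ENNReal.ofReal (1 - l') • P0' = PT →
      l = l' ∧ θ = θ' ∧ P0 = P0' := by
  intro l l' θ θ' α α' P0 P0' hP0 hP0' hgP0 hgP0' hl hl' hcon hcon' hmix hmix'
  have h1 := huniq l θ α hl (by
    rw [aux_moment g PT (P1 θ) P0 (hgθ θ) hgP0 hl hmix]; exact hcon)
  have h2 := huniq l' θ' α' hl' (by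
    rw [aux_moment g PT (P1 θ') P0' (hgθ θ') hgP0' hl' hmix']; exact hcon')
  obtain ⟨hll, hθθ, -⟩ := h1
  obtain ⟨hll', hθθ', -⟩ := h2
  refine ⟨hll.trans hll'.symm, hθθ.trans hθθ'.symm, ?_⟩
  subst hll hθθ
  subst hll' hθθ'
  have key : ENNReal.ofReal (1 - l') • P0 = ENNReal.ofReal (1 - l') • P0' := by
    have := hmix.trans hmix'.symm
    ext s hs
    have h := congrArg (fun μ : Measure X => μ s) this
    simp only [Measure.coe_add, Measure.coe_smul, Pi.add_apply, Pi.smul_apply] at h ⊢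
    have hfin : ENNReal.ofReal l' • (P1 θ') s ≠ ⊤ := by
      simp [ENNReal.mul_ne_top, measure_ne_top]
    exact (ENNReal.add_right_inj hfin).mp h
  have hne : ENNReal.ofReal (1 - l') ≠ 0 := by
    simp [ENNReal.ofReal_eq_zero]; linarith [hl'.2]
  have hnt : ENNReal.ofReal (1 - l') ≠ ⊤ := ENNReal.ofReal_ne_top
  ext s hs
  have h := congrArg (fun μ : Measure X => μ s) key
  simp only [Measure.coe_smul, Pi.smul_apply, smul_eq_mul] at h
  exact (ENNReal.mul_right_inj hne hnt).mp h
end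

section
/- The r-th L-moment λ_r = (1/r) Σ_{k=0}^{r−1} (−1)^k C(r−1,k) E[X_{r−k:r}] of a distribution with continuous cdf F and finite mean satisfies λ_r = ∫₀¹ F^{-1}(u) L_{r−1}(u) du, where L_r(u) = Σ_{k=0}^r (−1)^{r−k} C(r,k) C(r+k,k) u^k is the shifted Legendre polynomial of order r and F^{-1} is the quantile function. -/
open MeasureTheory Set

/-- The shifted Legendre polynomial `L_r(u) = Σ_{k=0}^r (−1)^{r−k} C(r,k) C(r+k,k) u^k`. -/
noncomputable def shiftedLegendre (r : ℕ) (u : ℝ) : ℝ :=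
  ∑ k ∈ Finset.range (r + 1),
    (-1 : ℝ) ^ (r - k) * (r.choose k) * ((r + k).choose k) * u ^ k

lemma legendre_inner_sum (n t : ℕ) (ht : t ≤ n) :
    ∑ k ∈ Finset.Ico t (n+1), ((n.choose k : ℝ))^2 * (k.choose t)
      = (n.choose t : ℝ) * ((2*n - t).choose (n - t)) := by
  have h1 : ∀ k ∈ Finset.Ico t (n+1),
      ((n.choose k : ℝ))^2 * (k.choose t)
        = (n.choose t : ℝ) * ((n.choose k : ℝ) * ((n-t).choose (k-t))) := by
    intro k hk
    simp only [Finset.mem_Ico] at hk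
    have hkn : k ≤ n := by omega
    have := Nat.choose_mul (n := n) hk.1
    have hcast : (n.choose k : ℝ) * (k.choose t) = (n.choose t : ℝ) * ((n-t).choose (k-t)) := by
      exact_mod_cast congrArg (Nat.cast : ℕ → ℝ) this
    ring_nf
    nlinarith [hcast]
  rw [Finset.sum_congr rfl h1, ← Finset.mul_sum]
  congr 1
  have h2 : ∑ k ∈ Finset.Ico t (n+1), (n.choose k : ℝ) * ((n-t).choose (k-t))
      = ∑ s ∈ Finset.range (n - t + 1), (n.choose (s+t) : ℝ) * ((n-t).choose s) := by
    rw [Finset.range_eq_Ico, Finset.sum_Ico_eq_sum_range]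
    apply Finset.sum_congr (by rw [Nat.succ_sub ht, Finset.range_eq_Ico])
    intro s _
    rw [add_comm t s, Nat.add_sub_cancel]
  rw [h2]
  have h3 : ((n - t) + n).choose (n - t)
      = ∑ k ∈ Finset.range (n - t + 1), (n-t).choose k * n.choose ((n-t) - k) := by
    rw [Nat.add_choose_eq, Finset.Nat.sum_antidiagonal_eq_sum_range_succ_mk]
  have h4 : (2*n - t).choose (n - t) = ((n-t) + n).choose (n-t) := by
    congr 1; omega
  rw [h4, h3]
  push_cast
  apply Finset.sum_congr rfl
  intro s hs
  simp only [Finset.mem_range] at hs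
  have : n.choose (s + t) = n.choose (n - t - s) := by
    rw [← Nat.choose_symm (show s + t ≤ n by omega)]
    congr 1; omega
  rw [this]; ring

lemma legendre_sum (n : ℕ) (u : ℝ) :
    ∑ k ∈ Finset.range (n+1), (-1:ℝ)^k * (n.choose k)^2 * (u^(n-k) * (1-u)^k)
      = shiftedLegendre n u := by
  have hexp : ∀ k : ℕ, (1 - u)^k = ∑ j ∈ Finset.range (k+1), (-1:ℝ)^j * (k.choose j) * u^j := by
    intro k
    rw [sub_eq_add_neg, add_comm, add_pow]
    apply Finset.sum_congr rfl
    intro j _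
    rw [neg_pow]
    ring
  calc ∑ k ∈ Finset.range (n+1), (-1:ℝ)^k * (n.choose k)^2 * (u^(n-k) * (1-u)^k)
      = ∑ k ∈ Finset.range (n+1), ∑ j ∈ Finset.range (k+1),
          (-1:ℝ)^(k+j) * (n.choose k)^2 * (k.choose j) * u^(n-k+j) := by
        apply Finset.sum_congr rfl
        intro k hk
        rw [hexp k, Finset.mul_sum, Finset.mul_sum]
        apply Finset.sum_congr rfl
        intro j _
        rw [pow_add, pow_add]
        ring
    _ = ∑ k ∈ Finset.range (n+1), ∑ t ∈ Finset.range (k+1),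
          (-1:ℝ)^t * (n.choose k)^2 * (k.choose t) * u^(n-t) := by
        apply Finset.sum_congr rfl
        intro k hk
        simp only [Finset.mem_range] at hk
        rw [← Finset.sum_range_reflect]
        apply Finset.sum_congr rfl
        intro j hj
        simp only [Finset.mem_range] at hj
        have hjk : j ≤ k := by omega
        have e1 : k + 1 - 1 - j = k - j := by omega
        rw [e1]
        have e2 : n - k + (k - j) = n - j := by omega
        have e3 : k.choose (k - j) = k.choose j := Nat.choose_symm hjk
        have e4 : (-1:ℝ)^(k + (k - j)) = (-1:ℝ)^j := by
          have h5 : k + (k - j) = 2*(k-j) + j := by omega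
          rw [h5, pow_add, pow_mul]
          simp
        rw [e2, e3, e4]
    _ = ∑ t ∈ Finset.range (n+1), ∑ k ∈ Finset.Ico t (n+1),
          (-1:ℝ)^t * (n.choose k)^2 * (k.choose t) * u^(n-t) := by
        have h := Finset.sum_Ico_Ico_comm 0 (n+1)
          (fun t k => (-1:ℝ)^t * (n.choose k)^2 * (k.choose t) * u^(n-t))
        simp only [Finset.range_eq_Ico]
        exact h.symm
    _ = ∑ t ∈ Finset.range (n+1),
          (-1:ℝ)^t * ((n.choose t : ℝ) * ((2*n - t).choose (n - t))) * u^(n-t) := by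
        apply Finset.sum_congr rfl
        intro t ht
        simp only [Finset.mem_range] at ht
        rw [← legendre_inner_sum n t (by omega), Finset.mul_sum, Finset.sum_mul]
        apply Finset.sum_congr rfl
        intro k _
        ring
    _ = shiftedLegendre n u := by
        rw [shiftedLegendre, ← Finset.sum_range_reflect]
        apply Finset.sum_congr rfl
        intro m hm
        simp only [Finset.mem_range] at hm
        have hmn : m ≤ n := by omega
        have e1 : n + 1 - 1 - m = n - m := by omega
        rw [e1]
        have e2 : n - (n - m) = m := by omega
        have e3 : 2*n - (n - m) = n + m := by omega
        have e4 : n.choose (n - m) = n.choose m := Nat.choose_symm hmn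
        rw [e2, e3, e4]
        ring

section Quantile
variable {μ : Measure ℝ} [IsProbabilityMeasure μ] {F Finv : ℝ → ℝ}

lemma cdf_mono (hF : ∀ x, F x = (μ (Iic x)).toReal) : Monotone F := fun a b hab => by
  rw [hF a, hF b]
  exact ENNReal.toReal_mono (measure_ne_top μ _) (measure_mono (Iic_subset_Iic.2 hab))

lemma cdf_nonneg (hF : ∀ x, F x = (μ (Iic x)).toReal) (x : ℝ) : 0 ≤ F x := by
  rw [hF]; exact ENNReal.toReal_nonneg

lemma cdf_le_one (hF : ∀ x, F x = (μ (Iic x)).toReal) (x : ℝ) : F x ≤ 1 := by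
  rw [hF]
  have : μ (Iic x) ≤ 1 := prob_le_one
  exact le_trans (ENNReal.toReal_mono (by simp) this) (by simp)

lemma cdf_tendsto_atTop (hF : ∀ x, F x = (μ (Iic x)).toReal) :
    Filter.Tendsto F Filter.atTop (nhds 1) := by
  have h1 : Filter.Tendsto (fun x => μ (Iic x)) Filter.atTop (nhds (μ univ)) :=
    tendsto_measure_Iic_atTop μ
  have h2 := (ENNReal.tendsto_toReal (show μ univ ≠ ⊤ by simp)).comp h1
  have hFe : F = fun x => (μ (Iic x)).toReal := funext hF
  rw [hFe]
  simpa [measure_univ, Function.comp_def] using h2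

lemma cdf_tendsto_atBot (hF : ∀ x, F x = (μ (Iic x)).toReal) :
    Filter.Tendsto F Filter.atBot (nhds 0) := by
  have hempty : ⋂ x : ℝ, Iic x = ∅ := by
    ext y
    simp only [mem_iInter, mem_Iic, mem_empty_iff_false, iff_false, not_forall, not_le]
    exact ⟨y - 1, by linarith⟩
  have h1 : Filter.Tendsto (fun x => μ (Iic x)) Filter.atBot (nhds (μ (⋂ x : ℝ, Iic x))) :=
    tendsto_measure_iInter_atBot (fun x => measurableSet_Iic.nullMeasurableSet)
      (fun a b hab => Iic_subset_Iic.2 hab) ⟨0, measure_ne_top μ _⟩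
  rw [hempty] at h1
  have h2 := (ENNReal.tendsto_toReal (show (μ (∅:Set ℝ)) ≠ ⊤ by simp)).comp h1
  have hFe : F = fun x => (μ (Iic x)).toReal := funext hF
  rw [hFe]
  simpa [Function.comp_def] using h2

lemma quantile_galois (hF : ∀ x, F x = (μ (Iic x)).toReal) (hFcont : Continuous F)
    (hFinv : ∀ u, Finv u = sInf {x | u ≤ F x}) {u : ℝ} (hu : u ∈ Ioo (0:ℝ) 1) (x : ℝ) :
    Finv u ≤ x ↔ u ≤ F x := by
  obtain ⟨hu0, hu1⟩ := hu
  have hne : {x | u ≤ F x}.Nonempty := by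
    have := (cdf_tendsto_atTop hF).eventually (eventually_ge_nhds hu1)
    obtain ⟨x, hx⟩ := this.exists
    exact ⟨x, hx⟩
  have hbdd : BddBelow {x | u ≤ F x} := by
    have := (cdf_tendsto_atBot hF).eventually (eventually_lt_nhds hu0)
    obtain ⟨z, hz⟩ := Filter.eventually_atBot.mp this
    exact ⟨z, fun y hy => le_of_not_gt fun h => absurd hy (not_le.2 (hz y h.le))⟩
  have hclosed : IsClosed {x | u ≤ F x} := isClosed_le continuous_const hFcont
  have hmem : Finv u ∈ {x | u ≤ F x} := by
    rw [hFinv]; exact hclosed.csInf_mem hne hbdd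
  constructor
  · intro h
    exact le_trans hmem (cdf_mono hF h)
  · intro h
    rw [hFinv]
    exact csInf_le hbdd h

lemma cdf_quantile (hF : ∀ x, F x = (μ (Iic x)).toReal) (hFcont : Continuous F)
    (hFinv : ∀ u, Finv u = sInf {x | u ≤ F x}) {u : ℝ} (hu : u ∈ Ioo (0:ℝ) 1) :
    F (Finv u) = u := by
  obtain ⟨hu0, hu1⟩ := hu
  have h1 : u ≤ F (Finv u) := ((quantile_galois hF hFcont hFinv ⟨hu0, hu1⟩ (Finv u)).mp le_rfl)
  have hb := (cdf_tendsto_atBot hF).eventually (eventually_lt_nhds hu0)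
  obtain ⟨z, hz⟩ := Filter.eventually_atBot.mp hb
  have hzb : z ≤ Finv u := by
    have hbdd : z ∈ lowerBounds {x | u ≤ F x} :=
      fun y hy => le_of_not_gt fun h => absurd hy (not_le.2 (hz y h.le))
    rw [hFinv]
    exact le_csInf ⟨Finv u, h1⟩ hbdd
  have hiv := intermediate_value_Icc hzb hFcont.continuousOn
  have humem : u ∈ Icc (F z) (F (Finv u)) := ⟨(hz z le_rfl).le, h1⟩
  obtain ⟨y, hy, hFy⟩ := hiv humem
  have h2 : Finv u ≤ y := (quantile_galois hF hFcont hFinv ⟨hu0, hu1⟩ y).mpr hFy.ge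
  have : y = Finv u := le_antisymm hy.2 h2
  rw [← this, hFy]

lemma quantile_monoOn (hF : ∀ x, F x = (μ (Iic x)).toReal) (hFcont : Continuous F)
    (hFinv : ∀ u, Finv u = sInf {x | u ≤ F x}) : MonotoneOn Finv (Ioo (0:ℝ) 1) := by
  intro u hu v hv huv
  exact (quantile_galois hF hFcont hFinv hu (Finv v)).mpr
    (le_trans huv (cdf_quantile hF hFcont hFinv hv).ge)

lemma quantile_map (hF : ∀ x, F x = (μ (Iic x)).toReal) (hFcont : Continuous F)
    (hFinv : ∀ u, Finv u = sInf {x | u ≤ F x}) :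
    (volume.restrict (Ioo (0:ℝ) 1)).map Finv = μ := by
  set ν := volume.restrict (Ioo (0:ℝ) 1) with hν
  have hmeas : AEMeasurable Finv ν :=
    aemeasurable_restrict_of_monotoneOn measurableSet_Ioo (quantile_monoOn hF hFcont hFinv)
  haveI : IsFiniteMeasure (ν.map Finv) := by
    constructor
    rw [Measure.map_apply_of_aemeasurable hmeas MeasurableSet.univ]
    simp [hν, Measure.restrict_apply_univ]
  apply Measure.ext_of_Iic
  intro a
  rw [Measure.map_apply_of_aemeasurable hmeas measurableSet_Iic,
    hν, Measure.restrict_apply' measurableSet_Ioo]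
  have hset : Finv ⁻¹' (Iic a) ∩ Ioo 0 1 = Iic (F a) ∩ Ioo 0 1 := by
    ext u
    simp only [mem_inter_iff, mem_preimage, mem_Iic, mem_Ioo]
    constructor
    · rintro ⟨h1, h2⟩
      exact ⟨(quantile_galois hF hFcont hFinv h2 a).mp h1, h2⟩
    · rintro ⟨h1, h2⟩
      exact ⟨(quantile_galois hF hFcont hFinv h2 a).mpr h1, h2⟩
  rw [hset]
  have h0 : 0 ≤ F a := cdf_nonneg hF a
  have h1 : F a ≤ 1 := cdf_le_one hF a
  rcases lt_or_eq_of_le h1 with hlt | heq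
  · have : Iic (F a) ∩ Ioo 0 1 = Ioc 0 (F a) := by
      ext u
      simp only [mem_inter_iff, mem_Iic, mem_Ioo, mem_Ioc]
      constructor
      · rintro ⟨h2, h3, h4⟩; exact ⟨h3, h2⟩
      · rintro ⟨h2, h3⟩; exact ⟨h3, h2, lt_of_le_of_lt h3 hlt⟩
    rw [this, Real.volume_Ioc, sub_zero, hF a, ENNReal.ofReal_toReal (measure_ne_top μ _)]
  · have : Iic (F a) ∩ Ioo 0 1 = Ioo 0 1 := by
      ext u
      simp only [mem_inter_iff, mem_Iic, mem_Ioo]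
      exact ⟨fun h => h.2, fun h => ⟨by linarith [h.2], h⟩⟩
    rw [this, Real.volume_Ioo]
    have : μ (Iic a) = 1 := by
      rw [← ENNReal.ofReal_toReal (measure_ne_top μ (Iic a)), ← hF a, heq]
      simp
    rw [this]; norm_num

lemma key_integral (hF : ∀ x, F x = (μ (Iic x)).toReal) (hFcont : Continuous F)
    (hFinv : ∀ u, Finv u = sInf {x | u ≤ F x}) {g : ℝ → ℝ} (hg : Continuous g) :
    ∫ x, x * g (F x) ∂μ = ∫ u in Ioo (0:ℝ) 1, Finv u * g u := by
  have hmeas : AEMeasurable Finv (volume.restrict (Ioo (0:ℝ) 1)) :=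
    aemeasurable_restrict_of_monotoneOn measurableSet_Ioo (quantile_monoOn hF hFcont hFinv)
  have hsm : AEStronglyMeasurable (fun x => x * g (F x))
      ((volume.restrict (Ioo (0:ℝ) 1)).map Finv) :=
    (continuous_id.mul (hg.comp hFcont)).aestronglyMeasurable
  rw [← quantile_map hF hFcont hFinv, integral_map hmeas hsm]
  apply integral_congr_ae
  filter_upwards [ae_restrict_mem measurableSet_Ioo] with u hu
  rw [cdf_quantile hF hFcont hFinv hu]

end Quantile

lemma shiftedLegendre_continuous' (n : ℕ) : Continuous (fun u : ℝ => ∑ k ∈ Finset.range (n + 1),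
    (-1 : ℝ) ^ (n - k) * (n.choose k) * ((n + k).choose k) * u ^ k) := by
  apply continuous_finset_sum
  intro k _
  exact (continuous_const.mul (continuous_pow k))

lemma shiftedLegendre_continuous (n : ℕ) : Continuous (shiftedLegendre n) := by
  unfold shiftedLegendre
  apply continuous_finset_sum
  intro k _
  exact continuous_const.mul (continuous_pow k)

/-- The r-th L-moment `(1/r) Σ_{k=0}^{r−1} (−1)^k C(r−1,k) E[X_{r−k:r}]` of a distribution
with continuous cdf `F` and finite mean equals `∫₀¹ F⁻¹(u) L_{r−1}(u) du`, where
`E[X_{j:r}] = (r!/((j−1)!(r−j)!)) ∫ x F(x)^{j−1}(1−F(x))^{r−j} dF(x)`. -/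
theorem stmt_14 (μ : Measure ℝ) [IsProbabilityMeasure μ]
    (F : ℝ → ℝ) (hF : ∀ x, F x = (μ (Iic x)).toReal)
    (hFcont : Continuous F)
    (hmean : Integrable (fun x => |x|) μ)
    (Finv : ℝ → ℝ) (hFinv : ∀ u, Finv u = sInf {x | u ≤ F x})
    (r : ℕ) (hr : 1 ≤ r) :
    (1 / r : ℝ) * ∑ k ∈ Finset.range r, (-1 : ℝ) ^ k * ((r - 1).choose k) *
        (((r.factorial : ℝ) / ((r - k - 1).factorial * k.factorial)) *
          ∫ x, x * F x ^ (r - k - 1) * (1 - F x) ^ k ∂μ)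
      = ∫ u in Ioo (0:ℝ) 1, Finv u * shiftedLegendre (r - 1) u := by
  obtain ⟨n, rfl⟩ : ∃ n, r = n + 1 := ⟨r - 1, by omega⟩
  have hr1 : n + 1 - 1 = n := by omega
  rw [hr1]
  -- integrability of each term
  have hIntg : ∀ k, Integrable (fun x => x * F x ^ (n - k) * (1 - F x) ^ k) μ := by
    intro k
    apply Integrable.mono hmean
    · exact ((continuous_id.mul ((hFcont.pow _))).mul
        ((continuous_const.sub hFcont).pow _)).aestronglyMeasurable
    · apply Filter.Eventually.of_forall
      intro x
      have h0 : 0 ≤ F x := cdf_nonneg hF x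
      have h1 : F x ≤ 1 := cdf_le_one hF x
      have e1 : |F x ^ (n - k)| ≤ 1 := by
        rw [abs_of_nonneg (pow_nonneg h0 _)]
        exact pow_le_one₀ h0 h1
      have e2 : |(1 - F x) ^ k| ≤ 1 := by
        rw [abs_of_nonneg (pow_nonneg (by linarith) _)]
        exact pow_le_one₀ (by linarith) (by linarith)
      have : ‖x * F x ^ (n - k) * (1 - F x) ^ k‖ = |x| * |F x ^ (n-k)| * |(1 - F x) ^ k| := by
        simp [abs_mul]
      rw [this]
      have hx : ‖|x|‖ = |x| := by simp
      rw [hx]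
      have e3 : |x| * |F x ^ (n-k)| * |(1 - F x) ^ k| ≤ |x| * |F x ^ (n-k)| :=
        mul_le_of_le_one_right (by positivity) e2
      have e4 : |x| * |F x ^ (n-k)| ≤ |x| := mul_le_of_le_one_right (abs_nonneg x) e1
      linarith
  -- step 1: simplify coefficients
  have hcoef : ∀ k ∈ Finset.range (n+1),
      (-1 : ℝ) ^ k * (n.choose k) *
        ((((n+1).factorial : ℝ) / ((n + 1 - k - 1).factorial * k.factorial)) *
          ∫ x, x * F x ^ (n + 1 - k - 1) * (1 - F x) ^ k ∂μ)
      = (n + 1 : ℝ) * ((-1 : ℝ) ^ k * ((n.choose k : ℝ))^2 *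
          ∫ x, x * F x ^ (n - k) * (1 - F x) ^ k ∂μ) := by
    intro k hk
    simp only [Finset.mem_range] at hk
    have hkn : k ≤ n := by omega
    have e1 : n + 1 - k - 1 = n - k := by omega
    rw [e1]
    have e2 : (((n+1).factorial : ℝ) / ((n - k).factorial * k.factorial))
        = (n+1) * (n.choose k) := by
      have h3 : (n.choose k) * k.factorial * (n-k).factorial = n.factorial :=
        Nat.choose_mul_factorial_mul_factorial hkn
      have h4 : ((n+1).factorial : ℝ) = (n+1) * n.factorial := by
        rw [Nat.factorial_succ]; push_cast; ring
      rw [h4, ← h3]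
      have hk0 : (k.factorial : ℝ) ≠ 0 := Nat.cast_ne_zero.2 (Nat.factorial_ne_zero k)
      have hnk0 : ((n-k).factorial : ℝ) ≠ 0 := Nat.cast_ne_zero.2 (Nat.factorial_ne_zero _)
      field_simp
      push_cast
      ring
    rw [e2]
    ring
  rw [Finset.sum_congr rfl hcoef, ← Finset.mul_sum]
  have hn1 : ((n:ℝ) + 1) ≠ 0 := by positivity
  rw [show (1 / ((n:ℕ)+1 : ℕ) : ℝ) * ((n + 1 : ℝ) * ∑ k ∈ Finset.range (n+1),
      (-1 : ℝ) ^ k * ((n.choose k : ℝ))^2 * ∫ x, x * F x ^ (n - k) * (1 - F x) ^ k ∂μ)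
      = ∑ k ∈ Finset.range (n+1),
      (-1 : ℝ) ^ k * ((n.choose k : ℝ))^2 * ∫ x, x * F x ^ (n - k) * (1 - F x) ^ k ∂μ from by
    push_cast
    field_simp]
  -- step 2: combine into a single integral
  have hcomb : ∑ k ∈ Finset.range (n+1),
      (-1 : ℝ) ^ k * ((n.choose k : ℝ))^2 * ∫ x, x * F x ^ (n - k) * (1 - F x) ^ k ∂μ
      = ∫ x, x * shiftedLegendre n (F x) ∂μ := by
    have h1 : ∀ k ∈ Finset.range (n+1),
        (-1 : ℝ) ^ k * ((n.choose k : ℝ))^2 * ∫ x, x * F x ^ (n - k) * (1 - F x) ^ k ∂μ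
        = ∫ x, (-1 : ℝ) ^ k * ((n.choose k : ℝ))^2 * (x * F x ^ (n - k) * (1 - F x) ^ k) ∂μ := by
      intro k _
      rw [integral_const_mul]
    rw [Finset.sum_congr rfl h1, ← integral_finset_sum]
    · apply integral_congr_ae
      apply Filter.Eventually.of_forall
      intro x
      dsimp only
      have := legendre_sum n (F x)
      rw [← this, Finset.mul_sum]
      apply Finset.sum_congr rfl
      intro k _
      ring
    · intro k _
      exact (hIntg k).const_mul _
  rw [hcomb]
  exact key_integral hF hFcont hFinv (shiftedLegendre_continuous n)
end

section
/- Suppose H_n, H : Φ × Ξ → ℝ satisfy: (i) sup_{φ,ξ}|H_n(φ,ξ) − H(φ,ξ)| → 0 in probability; (ii) for each φ, the supremum of ξ ↦ H(φ,ξ) is attained at a unique, well-separated ξ(φ) (for every ε>0 there is η>0 with H(φ,ξ(φ)) − H(φ,ξ̃) > η whenever ‖ξ̃ − ξ(φ)‖ > ε, uniformly in φ); (iii) the infimum of φ ↦ H(φ,ξ(φ)) at φ* is unique and well separated; (iv) ξ ↦ H(φ,ξ) is continuous. Then any φ̂_n ∈ arginf_φ sup_ξ H_n(φ,ξ) converges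 to φ* in probability. -/
open MeasureTheory Filter

/-- Consistency of the double-optimization (min-sup) M-estimator: under uniform convergence
in probability of `H_n` to `H`, unique well-separated inner suprema `ξ(φ)` (uniformly in
`φ`), a unique well-separated outer infimum `φ*`, and continuity of `H(φ,·)`, any
`ph_n ∈ arginf_φ sup_ξ H_n(φ,ξ)` converges to `φ*` in probability. -/
theorem stmt_18 {Ω : Type*} [MeasurableSpace Ω] (P : Measure Ω) [IsProbabilityMeasure P]
    {Φ Ξ : Type*} [MetricSpace Φ] [MetricSpace Ξ]
    (Hn : ℕ → Ω → Φ → Ξ → ℝ) (H : Φ → Ξ → ℝ)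
    (hunif : ∀ ε > 0,
      Tendsto (fun n => P {ω | ∃ φ ξ, ε ≤ |Hn n ω φ ξ - H φ ξ|}) atTop (nhds 0))
    (ξsel : Φ → Ξ)
    (hsup : ∀ φ ξ, H φ ξ ≤ H φ (ξsel φ))
    (hsep : ∀ ε > 0, ∃ η > 0, ∀ φ ξ, ε < dist ξ (ξsel φ) → H φ ξ + η < H φ (ξsel φ))
    (φstar : Φ)
    (hinf : ∀ φ, H φstar (ξsel φstar) ≤ H φ (ξsel φ))
    (hsep2 : ∀ ε > 0, ∃ η > 0, ∀ φ, ε < dist φ φstar →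
      H φstar (ξsel φstar) + η < H φ (ξsel φ))
    (hcont : ∀ φ, Continuous (H φ))
    (ξn : ℕ → Ω → Φ → Ξ)
    (hξn : ∀ n ω φ ξ, Hn n ω φ ξ ≤ Hn n ω φ (ξn n ω φ))
    (φhat : ℕ → Ω → Φ)
    (hφhat : ∀ n ω φ, Hn n ω (φhat n ω) (ξn n ω (φhat n ω)) ≤ Hn n ω φ (ξn n ω φ)) :
    ∀ ε > 0, Tendsto (fun n => P {ω | ε ≤ dist (φhat n ω) φstar}) atTop (nhds 0) := by
  intro ε hε
  obtain ⟨η, hη, hsepη⟩ := hsep2 (ε / 2) (by linarith)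
  set δ := η / 2 with hδdef
  have hδ : 0 < δ := by positivity
  -- deterministic step: uniform closeness < δ implies dist(ph, φ*) < ε
  have key : ∀ n (ω : Ω), (∀ φ ξ, |Hn n ω φ ξ - H φ ξ| < δ) →
      ¬ (ε ≤ dist (φhat n ω) φstar) := by
    intro n ω hclose habs
    set ph := φhat n ω
    have h1 : H ph (ξsel ph) - δ < Hn n ω ph (ξn n ω ph) := by
      have := abs_lt.1 (hclose ph (ξsel ph))
      have := hξn n ω ph (ξsel ph)
      linarith
    have h2 : Hn n ω φstar (ξn n ω φstar) < H φstar (ξsel φstar) + δ := by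
      have := abs_lt.1 (hclose φstar (ξn n ω φstar))
      have := hsup φstar (ξn n ω φstar)
      linarith
    have h3 := hφhat n ω φstar
    have h4 : H φstar (ξsel φstar) + η < H ph (ξsel ph) :=
      hsepη ph (by linarith)
    linarith
  have hmono : ∀ n, P {ω | ε ≤ dist (φhat n ω) φstar}
      ≤ P {ω | ∃ φ ξ, δ ≤ |Hn n ω φ ξ - H φ ξ|} := by
    intro n
    apply measure_mono
    intro ω hω
    by_contra hc
    simp only [Set.mem_setOf_eq, not_exists, not_le] at hc
    exact key n ω (fun φ ξ => hc φ ξ) hω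
  exact tendsto_of_tendsto_of_tendsto_of_le_of_le tendsto_const_nhds
    (hunif δ hδ) (fun n => zero_le) hmono
end
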